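/- Let G be a finite group with subgroups P̂₁, ..., P̂ₜ such that each P̂ᵢ is a pᵢ-group for distinct consecutive primes (pᵢ ≠ p_{i+1}), P̂ᵢ ≤ N_G(P̂ⱼ) for i ≤ j, and each quotient Pᵢ = P̂ᵢ/C_{P̂ᵢ}(P_{i+1}) is nontrivial with [Pᵢ, P_{i-1}] = Pᵢ. Then the product ∏ᵢ P̂ᵢ is a subgroup of G of Fitting length at least t. -/

import Mathlib

/-- A normal series of length `n` with nilpotent quotients. -/
structure NilpotentSeries (G : Type*) [Group G] (n : ℕ) where
  s : ℕ → Subgroup G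
  normal : ∀ i, (s i).Normal
  bot : s 0 = ⊥
  top : s n = ⊤
  mono : ∀ i, s i ≤ s (i + 1)
  nilpotent : ∀ i,
    Group.IsNilpotent ((s (i + 1)).map (@QuotientGroup.mk' _ _ (s i) (normal i)))

/-- The Fitting (nilpotent) length of a group: the least length of a normal series
with nilpotent quotients (junk value `0` if none exists). -/
noncomputable def fittingLength (G : Type*) [Group G] : ℕ :=
  sInf {n | Nonempty (NilpotentSeries G n)}

open scoped commutatorElement

section Helpers

variable {G : Type*} [Group G] {G₁ : Type*} [Group G₁] {G₂ : Type*} [Group G₂]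

lemma nilpotent_of_le {A B : Subgroup G} (h : A ≤ B) (hB : Group.IsNilpotent B) :
    Group.IsNilpotent A := by
  haveI := hB
  exact nilpotent_of_mulEquiv (Subgroup.subgroupOfEquivOfLe h)

lemma nilpotent_of_subsingleton {H : Type*} [Group H] [Subsingleton H] :
    Group.IsNilpotent H :=
  ⟨0, by ext x; simp [Subsingleton.elim x 1, Subgroup.one_mem]⟩

lemma nilpotent_subgroup_map (f : G →* G₁) (T : Subgroup G) (h : Group.IsNilpotent T) :
    Group.IsNilpotent (T.map f) := by
  haveI := h
  exact nilpotent_of_surjective (f.subgroupMap T) (f.subgroupMap_surjective T)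

lemma nilpotent_map_of_comp {f : G →* G₁} {g : G →* G₂} {χ : G₁ →* G₂}
    (hcomp : ∀ x, χ (f x) = g x) (T : Subgroup G)
    (h : Group.IsNilpotent (T.map f)) : Group.IsNilpotent (T.map g) := by
  have h2 : T.map g = (T.map f).map χ := by
    rw [Subgroup.map_map]
    congr 1
    ext x
    exact (hcomp x).symm
  rw [h2]
  exact nilpotent_subgroup_map χ _ h

lemma nilpotent_of_map_inj {f : G →* G₁} (hf : Function.Injective f) (T : Subgroup G)
    (h : Group.IsNilpotent (T.map f)) : Group.IsNilpotent T := by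
  haveI := h
  exact nilpotent_of_mulEquiv (T.equivMapOfInjective f hf).symm

/-- Restriction of a nilpotent series to a subgroup. -/
noncomputable def NilpotentSeries.restrict {n : ℕ} (ser : NilpotentSeries G n)
    (K : Subgroup G) : NilpotentSeries K n where
  s i := (ser.s i).subgroupOf K
  normal i := (ser.normal i).comap K.subtype
  bot := by show (ser.s 0).subgroupOf K = ⊥; rw [ser.bot]; ext x; simp [Subgroup.mem_subgroupOf]
  top := by show (ser.s n).subgroupOf K = ⊤; rw [ser.top]; ext x; simp [Subgroup.mem_subgroupOf]
  mono i := Subgroup.comap_mono (ser.mono i)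
  nilpotent i := by
    haveI : ((ser.s i).subgroupOf K).Normal := (ser.normal i).comap K.subtype
    haveI := ser.normal i
    set ψ : (↥K ⧸ (ser.s i).subgroupOf K) →* (G ⧸ ser.s i) :=
      QuotientGroup.map _ _ K.subtype le_rfl with hψ
    have hinj : Function.Injective ψ := by
      rw [← MonoidHom.ker_eq_bot_iff, eq_bot_iff]
      intro q hq
      obtain ⟨x, rfl⟩ := QuotientGroup.mk'_surjective ((ser.s i).subgroupOf K) q
      have : ψ ((QuotientGroup.mk' _) x) = 1 := hq
      change ((K.subtype x : G) : G ⧸ ser.s i) = 1 at this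
      have hx : (x : G) ∈ ser.s i := (QuotientGroup.eq_one_iff _).mp this
      simp only [Subgroup.mem_bot]
      exact (QuotientGroup.eq_one_iff x).mpr hx
    set X := ((ser.s (i+1)).subgroupOf K).map
        (QuotientGroup.mk' ((ser.s i).subgroupOf K)) with hX
    have hnil2 : Group.IsNilpotent (X.map ψ) := by
      have heq : X.map ψ = ((ser.s (i+1)).subgroupOf K).map
          ((QuotientGroup.mk' (ser.s i)).comp K.subtype) := by
        rw [hX, Subgroup.map_map]
        congr 1
      rw [heq, ← Subgroup.map_map]
      refine nilpotent_of_le (Subgroup.map_mono ?_) (ser.nilpotent i)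
      intro x hx
      obtain ⟨y, hy, rfl⟩ := hx
      exact hy
    exact nilpotent_of_map_inj hinj X hnil2

/-- Pushforward of a nilpotent series along a surjective homomorphism. -/
noncomputable def NilpotentSeries.map {n : ℕ} (ser : NilpotentSeries G n) (f : G →* G₁)
    (hf : Function.Surjective f) : NilpotentSeries G₁ n where
  s i := (ser.s i).map f
  normal i := (ser.normal i).map f hf
  bot := by show (ser.s 0).map f = ⊥; rw [ser.bot]; exact Subgroup.map_bot f
  top := by show (ser.s n).map f = ⊤; rw [ser.top]; exact Subgroup.map_top_of_surjective f hf
  mono i := Subgroup.map_mono (ser.mono i)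
  nilpotent i := by
    haveI := ser.normal i
    haveI : ((ser.s i).map f).Normal := (ser.normal i).map f hf
    have hle : ser.s i ≤ Subgroup.comap f ((ser.s i).map f) := Subgroup.le_comap_map _ _
    set χ : (G ⧸ ser.s i) →* (G₁ ⧸ (ser.s i).map f) :=
      QuotientGroup.map _ _ f hle with hχ
    have key : ∀ x : G, χ ((QuotientGroup.mk' (ser.s i)) x)
        = ((QuotientGroup.mk' ((ser.s i).map f)).comp f) x := fun x => by
      rw [hχ, QuotientGroup.map_mk']; rfl
    have heq : ((ser.s (i+1)).map f).map (QuotientGroup.mk' ((ser.s i).map f))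
        = (ser.s (i+1)).map ((QuotientGroup.mk' ((ser.s i).map f)).comp f) := by
      rw [Subgroup.map_map]
    rw [heq]
    exact nilpotent_map_of_comp key _ (ser.nilpotent i)

/-- Quotient a nilpotent series by its first stage, dropping one step. -/
noncomputable def NilpotentSeries.quotDrop {n : ℕ} (ser : NilpotentSeries G (n+1))
    (N : Subgroup G) [hN : N.Normal] (h1 : N = ser.s 1) :
    NilpotentSeries (G ⧸ N) n where
  s i := (ser.s (i+1)).map (QuotientGroup.mk' N)
  normal i := (ser.normal (i+1)).map _ (QuotientGroup.mk'_surjective N)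
  bot := by
    show (ser.s 1).map (QuotientGroup.mk' N) = ⊥
    rw [← h1]; exact QuotientGroup.map_mk'_self N
  top := by
    show (ser.s (n+1)).map (QuotientGroup.mk' N) = ⊤
    rw [ser.top]; exact Subgroup.map_top_of_surjective _ (QuotientGroup.mk'_surjective N)
  mono i := Subgroup.map_mono (ser.mono (i+1))
  nilpotent i := by
    haveI := ser.normal (i+1)
    haveI : ((ser.s (i+1)).map (QuotientGroup.mk' N)).Normal :=
      (ser.normal (i+1)).map _ (QuotientGroup.mk'_surjective N)
    set Mi := (ser.s (i+1)).map (QuotientGroup.mk' N)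
    set g : G →* ((G ⧸ N) ⧸ Mi) := (QuotientGroup.mk' Mi).comp (QuotientGroup.mk' N) with hg
    have hker : ∀ x ∈ ser.s (i+1), g x = 1 := by
      intro x hx
      rw [hg]
      simp only [MonoidHom.comp_apply]
      exact (QuotientGroup.eq_one_iff _).mpr (Subgroup.mem_map_of_mem _ hx)
    set χ : (G ⧸ ser.s (i+1)) →* ((G ⧸ N) ⧸ Mi) := QuotientGroup.lift _ g hker with hχ
    have key : ∀ x : G, χ ((QuotientGroup.mk' (ser.s (i+1))) x) = g x := fun x => by
      rw [hχ]; rfl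
    have heq : ((ser.s (i+2)).map (QuotientGroup.mk' N)).map (QuotientGroup.mk' Mi)
        = (ser.s (i+2)).map g := by
      rw [hg, Subgroup.map_map]
    rw [heq]
    exact nilpotent_map_of_comp key _ (ser.nilpotent (i+1))

end Helpers

section Helpers2

variable {G : Type*} [Group G] {G₁ : Type*} [Group G₁]

lemma normalizer_of_conj {H S : Subgroup G}
    (h : ∀ x ∈ H, ∀ c ∈ S, x * c * x⁻¹ ∈ S) : H ≤ Subgroup.normalizer (SetLike.coe S) := by
  intro x hx
  rw [Subgroup.mem_normalizer_iff]
  intro y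
  constructor
  · intro hy; exact h x hx y hy
  · intro hy
    have := h x⁻¹ (inv_mem hx) _ hy
    simpa [mul_assoc] using this

lemma conj_mem_of_le_normalizer {H S : Subgroup G} (h : H ≤ Subgroup.normalizer (SetLike.coe S))
    {x c : G} (hx : x ∈ H) (hc : c ∈ S) : x * c * x⁻¹ ∈ S :=
  (Subgroup.mem_normalizer_iff.mp (h hx) c).mp hc

lemma map_normalizer_le (f : G →* G₁) {A B : Subgroup G} (h : A ≤ Subgroup.normalizer (SetLike.coe B)) :
    A.map f ≤ Subgroup.normalizer (SetLike.coe (B.map f)) := by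
  apply normalizer_of_conj
  rintro x ⟨a, ha, rfl⟩ c ⟨b, hb, rfl⟩
  exact ⟨a * b * a⁻¹, conj_mem_of_le_normalizer h ha hb, by simp⟩

lemma subgroupOf_normalizer_le {A B K : Subgroup G} (hA : A ≤ K) (h : A ≤ Subgroup.normalizer (SetLike.coe B)) :
    A.subgroupOf K ≤ Subgroup.normalizer (SetLike.coe (B.subgroupOf K)) := by
  apply normalizer_of_conj
  intro x hx c hc
  have : (x : G) * c * (x : G)⁻¹ ∈ B := conj_mem_of_le_normalizer h hx hc
  simpa [Subgroup.mem_subgroupOf] using this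

lemma commutator_le_of_le {A B K : Subgroup G} (hA : A ≤ K) (hB : B ≤ K) : ⁅A, B⁆ ≤ K :=
  Subgroup.commutator_le.mpr fun a ha b hb => by
    rw [commutatorElement_def]
    exact Subgroup.mul_mem _ (Subgroup.mul_mem _
      (Subgroup.mul_mem _ (hA ha) (hB hb)) (inv_mem (hA ha))) (inv_mem (hB hb))

lemma commutator_subgroupOf {A B K : Subgroup G} (hA : A ≤ K) (hB : B ≤ K) :
    ⁅A, B⁆.subgroupOf K = ⁅A.subgroupOf K, B.subgroupOf K⁆ := by
  apply Subgroup.map_injective (Subgroup.subtype_injective K)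
  rw [Subgroup.map_commutator, Subgroup.subgroupOf_map_subtype, Subgroup.subgroupOf_map_subtype,
    Subgroup.subgroupOf_map_subtype, inf_of_le_left hA, inf_of_le_left hB,
    inf_of_le_left (commutator_le_of_le hA hB)]

end Helpers2

/-- The data of a tower of `p i`-subgroups of height `t` inside an ambient group `G`. -/
structure TowerIn (G : Type*) [Group G] (t : ℕ) where
  p : ℕ → ℕ
  P : ℕ → Subgroup G
  C : ℕ → Subgroup G
  hprime : ∀ i < t, (p i).Prime
  hpgroup : ∀ i < t, IsPGroup (p i) (P i)
  hpne : ∀ i, i + 1 < t → p i ≠ p (i + 1)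
  hnorm : ∀ i j, i ≤ j → j < t → P i ≤ Subgroup.normalizer (SetLike.coe (P j))
  hClast : C (t - 1) = ⊥
  hCle : ∀ i < t, C i ≤ P i
  hCdef : ∀ i, i + 1 < t → ∀ x : G,
    x ∈ C i ↔ x ∈ P i ∧ ∀ y ∈ P (i + 1), ⁅x, y⁆ ∈ C (i + 1)
  hnontriv : ∀ i < t, C i ≠ P i
  hcomm : ∀ i, i + 1 < t → ⁅P (i + 1), P i⁆ ⊔ C (i + 1) = P (i + 1)

namespace TowerIn

variable {G : Type*} [Group G] {t : ℕ}

/-- Each `P j` with `j ≤ i` normalizes `C i`. -/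
lemma normC (T : TowerIn G t) : ∀ k i, i + k = t - 1 → i < t → ∀ j ≤ i,
    T.P j ≤ Subgroup.normalizer (SetLike.coe (T.C i)) := by
  intro k
  induction k with
  | zero =>
    intro i hik hit j hji
    have : i = t - 1 := by omega
    subst this
    rw [T.hClast]
    apply normalizer_of_conj
    intro x _ c hc
    simp only [Subgroup.mem_bot] at hc ⊢
    simp [hc]
  | succ k ih =>
    intro i hik hit j hji
    apply normalizer_of_conj
    intro x hx c hc
    have hi1t : i + 1 < t := by omega
    rw [T.hCdef i hi1t] at hc ⊢
    obtain ⟨hcP, hcC⟩ := hc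
    constructor
    · exact conj_mem_of_le_normalizer (T.hnorm j i hji (by omega)) hx hcP
    · intro y hy
      have hyc : x⁻¹ * y * x ∈ T.P (i + 1) := by
        have := conj_mem_of_le_normalizer (T.hnorm j (i+1) (by omega) hi1t)
          (inv_mem hx) hy
        simpa [mul_assoc] using this
      have hcom : ⁅x * c * x⁻¹, y⁆ = x * ⁅c, x⁻¹ * y * x⁆ * x⁻¹ := by
        simp only [commutatorElement_def]
        group
      rw [hcom]
      exact conj_mem_of_le_normalizer (ih (i+1) (by omega) hi1t j (by omega)) hx
        (hcC _ hyc)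

lemma normC' (T : TowerIn G t) {i j : ℕ} (hit : i < t) (hji : j ≤ i) :
    T.P j ≤ Subgroup.normalizer (SetLike.coe (T.C i)) :=
  T.normC (t - 1 - i) i (by omega) hit j hji

end TowerIn

/-- The key coprimality/nilpotency contradiction. -/
lemma tower_core {G : Type*} [Group G] [Finite G] {p q : ℕ} (hp : p.Prime) (hq : q.Prime)
    (hpq : q ≠ p) (P Q C N : Subgroup G)
    (hP : IsPGroup p P) (hQ : IsPGroup q Q)
    (hPbot : P ≠ ⊥)
    (hcent : ∀ c ∈ C, ∀ x ∈ P, c * x = x * c)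
    (hCQ : C ≤ Q)
    (hcomm : ⁅P, Q⁆ = P)
    (hNnil : Group.IsNilpotent N)
    (hPnormN : P ≤ Subgroup.normalizer (SetLike.coe N))
    (hdecomp : ∀ g ∈ Q, ∃ c ∈ C, ∃ m ∈ N, g = c * m) : False := by
  haveI : Fact q.Prime := ⟨hq⟩
  haveI : Fact p.Prime := ⟨hp⟩
  haveI := hNnil
  obtain ⟨S⟩ : Nonempty (Sylow q N) := inferInstance
  have h34 := (isNilpotent_of_finite_tfae (G := ↥N)).out 0 3
  have hSnormal : (S : Subgroup N).Normal := h34.mp hNnil q ⟨hq⟩ S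
  haveI := Sylow.unique_of_normal S hSnormal
  set D : Subgroup G := (S : Subgroup N).map N.subtype with hD
  have hDq : IsPGroup q D := S.isPGroup'.map _
  -- every element of N that lies in Q lies in D
  have hQND : ∀ m : G, m ∈ N → m ∈ Q → m ∈ D := by
    intro m hmN hmQ
    have hR : IsPGroup q (Q.subgroupOf N) := hQ.comap_subtype
    obtain ⟨S', hS'⟩ := hR.exists_le_sylow
    have hSS : S' = S := Subsingleton.elim _ _
    rw [hSS] at hS'
    have : (⟨m, hmN⟩ : N) ∈ (S : Subgroup N) := hS' (by simpa [Subgroup.mem_subgroupOf])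
    exact ⟨⟨m, hmN⟩, this, rfl⟩
  -- P normalizes D
  have hPD : P ≤ Subgroup.normalizer (SetLike.coe D) := by
    apply normalizer_of_conj
    intro x hx d hd
    obtain ⟨nd, hnd, rfl⟩ := hd
    set e := Subgroup.normalizerMonoidHom N ⟨x, hPnormN hx⟩ with he
    have hchar : (S : Subgroup N).Characteristic := Sylow.characteristic_of_normal S hSnormal
    have hmapS : (S : Subgroup N).map (MulEquiv.toMonoidHom (e : N ≃* N))
        = (S : Subgroup N) := Subgroup.characteristic_iff_map_eq.mp hchar _
    have hmem : e nd ∈ (S : Subgroup N) := by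
      rw [← hmapS]
      exact ⟨nd, hnd, rfl⟩
    refine ⟨e nd, hmem, ?_⟩
    rw [he]
    simp [Subgroup.normalizerMonoidHom_apply_apply_coe]
  -- so [P, Q] ≤ D
  have hPQD : ⁅P, Q⁆ ≤ D := by
    rw [Subgroup.commutator_le]
    intro x hxP g hgQ
    obtain ⟨c, hc, m, hm, hgcm⟩ := hdecomp g⁻¹ (inv_mem hgQ)
    have hmQ : m ∈ Q := by
      have hme : m = c⁻¹ * g⁻¹ := by rw [hgcm]; group
      rw [hme]
      exact Subgroup.mul_mem _ (inv_mem (hCQ hc)) (inv_mem hgQ)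
    have hmD : m ∈ D := hQND m hm hmQ
    have hg : g = m⁻¹ * c⁻¹ := by
      have : g⁻¹ = c * m := hgcm
      rw [← inv_inv g, this]; group
    have hxc : c⁻¹ * x⁻¹ * c = x⁻¹ := by
      have h1 : Commute c x := hcent c hc x hxP
      have h2 : Commute c⁻¹ x⁻¹ := (h1.inv_inv)
      rw [h2.eq, mul_assoc, inv_mul_cancel, mul_one]
    have hcomeq : ⁅x, g⁆ = (x * m⁻¹ * x⁻¹) * m := by
      rw [hg, commutatorElement_def]
      calc x * (m⁻¹ * c⁻¹) * x⁻¹ * (m⁻¹ * c⁻¹)⁻¹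
          = x * m⁻¹ * (c⁻¹ * x⁻¹ * c) * m := by group
        _ = x * m⁻¹ * x⁻¹ * m := by rw [hxc]
        _ = (x * m⁻¹ * x⁻¹) * m := by group
    rw [hcomeq]
    exact Subgroup.mul_mem _ (conj_mem_of_le_normalizer hPD hxP (inv_mem hmD)) hmD
  have hPleD : P ≤ D := hcomm ▸ hPQD
  have hdisj : Disjoint P D :=
    IsPGroup.disjoint_of_ne p q (fun h => hpq h.symm) P D hP hDq
  exact hPbot (le_bot_iff.mp (hdisj le_rfl hPleD))

lemma normalizer_of_conj' {G : Type*} [Group G] {H S : Subgroup G}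
    (h : ∀ x ∈ H, ∀ c ∈ S, x * c * x⁻¹ ∈ S) : H ≤ Subgroup.normalizer (SetLike.coe S) := by
  intro x hx
  rw [Subgroup.mem_normalizer_iff]
  intro y
  exact ⟨fun hy => h x hx y hy, fun hy => by simpa [mul_assoc] using h x⁻¹ (inv_mem hx) _ hy⟩

lemma conj_mem_of_le_normalizer' {G : Type*} [Group G] {H S : Subgroup G}
    (h : H ≤ Subgroup.normalizer (SetLike.coe S)) {x c : G} (hx : x ∈ H) (hc : c ∈ S) : x * c * x⁻¹ ∈ S :=
  (Subgroup.mem_normalizer_iff.mp (h hx) c).mp hc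

section CPred

variable {Γ : Type*} [Group Γ]

lemma comm_id1 (a b y : Γ) : ⁅a * b, y⁆ = a * ⁅b, y⁆ * a⁻¹ * ⁅a, y⁆ := by
  simp only [commutatorElement_def]; group

lemma comm_id2 (a y : Γ) : ⁅a⁻¹, y⁆ = a⁻¹ * ⁅a, y⁆⁻¹ * a := by
  simp only [commutatorElement_def]; group

lemma comm_id3 (g x y : Γ) : ⁅g * x * g⁻¹, y⁆ = g * ⁅x, g⁻¹ * y * g⁆ * g⁻¹ := by
  simp only [commutatorElement_def]; group

/-- Auxiliary downward recursion for the centralizer chain, with `k` the distance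
from the top index. -/
def cpredAux (Q : ℕ → Subgroup Γ) (top : ℕ) : ℕ → Γ → Prop
  | 0 => fun x => x = 1
  | (k+1) => fun x => x ∈ Q (top - (k+1)) ∧ ∀ y ∈ Q (top - k), cpredAux Q top k ⁅x, y⁆

variable (Q : ℕ → Subgroup Γ) (top : ℕ)

lemma cpred_machinery (hQnorm : ∀ i j, i ≤ j → j ≤ top → Q i ≤ Subgroup.normalizer (SetLike.coe (Q j))) :
    ∀ k, (∃ S : Subgroup Γ, ∀ x, x ∈ S ↔ cpredAux Q top k x) ∧
      (∀ j, j ≤ top - k → ∀ g ∈ Q j, ∀ x,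
        cpredAux Q top k x → cpredAux Q top k (g * x * g⁻¹)) := by
  intro k
  induction k with
  | zero =>
    constructor
    · exact ⟨⊥, fun x => by simp [cpredAux, Subgroup.mem_bot]⟩
    · intro j _ g _ x hx
      simp only [cpredAux] at hx ⊢
      simp [hx]
  | succ k ih =>
    obtain ⟨⟨Sk, hSk⟩, hconjk⟩ := ih
    have hle01 : top - (k+1) ≤ top - k := by omega
    have hQ0top : top - (k+1) ≤ top := by omega
    have hQ1top : top - k ≤ top := by omega
    constructor
    · refine ⟨{ carrier := setOf (cpredAux Q top (k+1)),
                one_mem' := ?one,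
                mul_mem' := ?mul,
                inv_mem' := ?inv }, fun x => Iff.rfl⟩
      case one =>
        refine ⟨one_mem _, fun y hy => ?_⟩
        have h1 : ⁅(1 : Γ), y⁆ = 1 := by simp [commutatorElement_def]
        rw [h1]
        exact (hSk 1).mp (one_mem Sk)
      case mul =>
        rintro a b ⟨haQ, haC⟩ ⟨hbQ, hbC⟩
        refine ⟨mul_mem haQ hbQ, fun y hy => ?_⟩
        rw [comm_id1]
        have h1 : cpredAux Q top k (a * ⁅b, y⁆ * a⁻¹) :=
          hconjk _ hle01 a haQ _ (hbC y hy)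
        have h2 : a * ⁅b, y⁆ * a⁻¹ * ⁅a, y⁆ ∈ Sk :=
          mul_mem ((hSk _).mpr h1) ((hSk _).mpr (haC y hy))
        exact (hSk _).mp h2
      case inv =>
        rintro a ⟨haQ, haC⟩
        refine ⟨inv_mem haQ, fun y hy => ?_⟩
        rw [comm_id2]
        have h1 : cpredAux Q top k ⁅a, y⁆⁻¹ :=
          (hSk _).mp (inv_mem ((hSk _).mpr (haC y hy)))
        have h2 := hconjk _ hle01 a⁻¹ (inv_mem haQ) _ h1
        simpa using h2
    · rintro j hj g hg x ⟨hxQ, hxC⟩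
      refine ⟨conj_mem_of_le_normalizer' (hQnorm j _ hj hQ0top) hg hxQ, fun y hy => ?_⟩
      rw [comm_id3]
      have hjy : j ≤ top - k := le_trans hj hle01
      have hyg : g⁻¹ * y * g ∈ Q (top - k) := by
        have := conj_mem_of_le_normalizer' (hQnorm j _ hjy hQ1top) (inv_mem hg) hy
        simpa using this
      exact hconjk j hjy g hg _ (hxC _ hyg)

/-- The canonical centralizer chain of subgroups. -/
def towC : ℕ → Subgroup Γ := fun i => Subgroup.closure {x | cpredAux Q top (top - i) x}

variable {Q top}

lemma mem_towC (hQnorm : ∀ i j, i ≤ j → j ≤ top → Q i ≤ Subgroup.normalizer (SetLike.coe (Q j))) (i : ℕ) (x : Γ) :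
    x ∈ towC Q top i ↔ cpredAux Q top (top - i) x := by
  obtain ⟨⟨S, hS⟩, -⟩ := cpred_machinery Q top hQnorm (top - i)
  have hset : {x | cpredAux Q top (top - i) x} = (S : Set Γ) := by
    ext z; exact (hS z).symm
  rw [towC, hset, Subgroup.closure_eq]
  exact hS x

lemma towC_top (hQnorm : ∀ i j, i ≤ j → j ≤ top → Q i ≤ Subgroup.normalizer (SetLike.coe (Q j))) :
    towC Q top top = ⊥ := by
  ext x
  rw [mem_towC hQnorm]
  simp only [Nat.sub_self]
  simp [cpredAux, Subgroup.mem_bot]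

lemma towC_succ_iff (hQnorm : ∀ i j, i ≤ j → j ≤ top → Q i ≤ Subgroup.normalizer (SetLike.coe (Q j)))
    {i : ℕ} (hi : i < top) (x : Γ) :
    x ∈ towC Q top i ↔ x ∈ Q i ∧ ∀ y ∈ Q (i + 1), ⁅x, y⁆ ∈ towC Q top (i + 1) := by
  rw [mem_towC hQnorm]
  have hk : top - i = (top - (i+1)) + 1 := by omega
  rw [hk]
  show (x ∈ Q (top - ((top - (i+1)) + 1)) ∧
      ∀ y ∈ Q (top - (top - (i+1))), cpredAux Q top (top - (i+1)) ⁅x, y⁆) ↔ _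
  have e1 : top - ((top - (i+1)) + 1) = i := by omega
  have e2 : top - (top - (i+1)) = i + 1 := by omega
  rw [e1, e2]
  constructor
  · rintro ⟨h1, h2⟩
    exact ⟨h1, fun y hy => (mem_towC hQnorm (i+1) _).mpr (h2 y hy)⟩
  · rintro ⟨h1, h2⟩
    exact ⟨h1, fun y hy => (mem_towC hQnorm (i+1) _).mp (h2 y hy)⟩

lemma towC_le (hQnorm : ∀ i j, i ≤ j → j ≤ top → Q i ≤ Subgroup.normalizer (SetLike.coe (Q j)))
    {i : ℕ} (hi : i ≤ top) : towC Q top i ≤ Q i := by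
  rcases Nat.lt_or_ge i top with h | h
  · intro x hx
    exact ((towC_succ_iff hQnorm h x).mp hx).1
  · have : i = top := le_antisymm hi h
    subst this
    rw [towC_top hQnorm]
    exact bot_le

end CPred


section ConjMap

variable {G : Type*} [Group G]

lemma conj_map_eq_of_mem_normalizer {x : G} {B : Subgroup G} (h : x ∈ Subgroup.normalizer (SetLike.coe B)) :
    B.map (MulAut.conj x).toMonoidHom = B := by
  ext y
  constructor
  · rintro ⟨b, hb, rfl⟩
    exact conj_mem_of_le_normalizer' (le_refl (Subgroup.normalizer (SetLike.coe B)) |>.trans le_rfl) (by exact h) hb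
  · intro hy
    refine ⟨x⁻¹ * y * x, ?_, by simp [MulAut.conj]; group⟩
    have := conj_mem_of_le_normalizer' (le_refl (Subgroup.normalizer (SetLike.coe B))) (inv_mem h) hy
    simpa [mul_assoc] using this

lemma mem_normalizer_of_conj_map_eq {x : G} {B : Subgroup G}
    (h : B.map (MulAut.conj x).toMonoidHom = B) : x ∈ Subgroup.normalizer (SetLike.coe B) := by
  rw [Subgroup.mem_normalizer_iff]
  intro y
  constructor
  · intro hy
    rw [← h]
    exact ⟨y, hy, rfl⟩
  · intro hy
    rw [← h] at hy
    obtain ⟨b, hb, hbe⟩ := hy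
    have : b = y := by
      have : x * b * x⁻¹ = x * y * x⁻¹ := by
        simpa [MulAut.conj] using hbe
      exact mul_left_cancel (mul_right_cancel this)
    rwa [← this]

lemma normalizer_biSup {s : Finset ℕ} {B : ℕ → Subgroup G} {A : Subgroup G}
    (h : ∀ m ∈ s, A ≤ Subgroup.normalizer (SetLike.coe (B m))) : A ≤ Subgroup.normalizer (SetLike.coe (⨆ m ∈ s, B m)) := by
  intro x hx
  apply mem_normalizer_of_conj_map_eq
  rw [Subgroup.map_iSup]
  refine iSup_congr fun m => ?_
  rw [Subgroup.map_iSup]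
  exact iSup_congr fun hm => conj_map_eq_of_mem_normalizer (h m hm hx)

lemma normal_subgroupOf_of_le_normalizer {A K : Subgroup G} (h : K ≤ Subgroup.normalizer (SetLike.coe A)) :
    (A.subgroupOf K).Normal := by
  constructor
  intro a ha g
  have : (g : G) * (a : G) * (g : G)⁻¹ ∈ A := conj_mem_of_le_normalizer' h g.2 ha
  simpa [Subgroup.mem_subgroupOf] using this

end ConjMap

namespace TowerIn

variable {G : Type*} [Group G] {t : ℕ}

/-- The terms of the standard series associated with the tower. -/
def W (T : TowerIn G t) (j : ℕ) : Subgroup G := ⨆ i ∈ Finset.Ico (t - j) t, T.P i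

lemma P_le_H (T : TowerIn G t) {i : ℕ} (hi : i < t) :
    T.P i ≤ ⨆ i ∈ Finset.range t, T.P i :=
  le_biSup _ (Finset.mem_range.mpr hi)

lemma W_le_H (T : TowerIn G t) (j : ℕ) : T.W j ≤ ⨆ i ∈ Finset.range t, T.P i := by
  refine iSup_le fun i => iSup_le fun hi => ?_
  exact T.P_le_H (Finset.mem_Ico.mp hi).2

lemma H_norm_W (T : TowerIn G t) (j : ℕ) :
    (⨆ i ∈ Finset.range t, T.P i) ≤ Subgroup.normalizer (SetLike.coe (T.W j)) := by
  refine iSup_le fun i => iSup_le fun hi => ?_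
  have hit : i < t := Finset.mem_range.mp hi
  rcases Nat.lt_or_ge i (t - j) with h | h
  · refine normalizer_biSup fun m hm => ?_
    have hm' := Finset.mem_Ico.mp hm
    exact T.hnorm i m (by omega) hm'.2
  · exact le_trans (le_biSup _ (Finset.mem_Ico.mpr ⟨h, hit⟩)) Subgroup.le_normalizer

lemma W_zero (T : TowerIn G t) : T.W 0 = ⊥ := by
  rw [W, Nat.sub_zero, Finset.Ico_self]
  simp

lemma W_top (T : TowerIn G t) {j : ℕ} (hj : t ≤ j) :
    T.W j = ⨆ i ∈ Finset.range t, T.P i := by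
  rw [W, Nat.sub_eq_zero_of_le hj, ← Finset.range_eq_Ico]

lemma W_succ (T : TowerIn G t) {j : ℕ} (hj : j < t) :
    T.W (j + 1) = T.P (t - j - 1) ⊔ T.W j := by
  rw [W, W]
  have e1 : t - (j + 1) = t - j - 1 := by omega
  have e2 : Finset.Ico (t - j - 1) t = insert (t - j - 1) (Finset.Ico (t - j) t) := by
    ext x
    simp only [Finset.mem_Ico, Finset.mem_insert]
    omega
  rw [e1, e2, Finset.iSup_insert]

/-- The tower gives rise to a nilpotent series of length `t` on the join. -/
noncomputable def series (T : TowerIn G t) [Finite G] :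
    NilpotentSeries (⨆ i ∈ Finset.range t, T.P i : Subgroup G) t where
  s j := (T.W j).subgroupOf (⨆ i ∈ Finset.range t, T.P i)
  normal j := normal_subgroupOf_of_le_normalizer (T.H_norm_W j)
  bot := by
    show (T.W 0).subgroupOf _ = ⊥
    rw [T.W_zero]
    ext x; simp [Subgroup.mem_subgroupOf]
  top := by
    show (T.W t).subgroupOf _ = ⊤
    rw [T.W_top le_rfl]
    exact Subgroup.subgroupOf_self _
  mono j := by
    apply Subgroup.comap_mono
    refine biSup_mono fun i hi => ?_
    have := Finset.mem_Ico.mp hi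
    exact Finset.mem_Ico.mpr ⟨by omega, this.2⟩
  nilpotent j := by
    set H := (⨆ i ∈ Finset.range t, T.P i : Subgroup G) with hHdef
    haveI : ((T.W j).subgroupOf H).Normal := normal_subgroupOf_of_le_normalizer (T.H_norm_W j)
    rcases Nat.lt_or_ge j t with hj | hj
    · -- main case : the quotient is an image of a p-group
      have hp := T.hprime (t - j - 1) (by omega)
      haveI : Fact ((T.p (t - j - 1)).Prime) := ⟨hp⟩
      have hsplit : (T.W (j + 1)).subgroupOf H
          = (T.P (t - j - 1)).subgroupOf H ⊔ (T.W j).subgroupOf H := by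
        rw [T.W_succ hj, Subgroup.subgroupOf_sup (T.P_le_H (by omega)) (T.W_le_H j)]
      have hX : ((T.W (j+1)).subgroupOf H).map
            (QuotientGroup.mk' ((T.W j).subgroupOf H))
          = ((T.P (t - j - 1)).subgroupOf H).map
              (QuotientGroup.mk' ((T.W j).subgroupOf H)) := by
        rw [hsplit, Subgroup.map_sup, QuotientGroup.map_mk'_self, sup_bot_eq]
      rw [hX]
      have hpg : IsPGroup (T.p (t - j - 1)) (((T.P (t - j - 1)).subgroupOf H).map
          (QuotientGroup.mk' ((T.W j).subgroupOf H))) :=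
        ((T.hpgroup (t - j - 1) (by omega)).comap_subtype).map _
      exact hpg.isNilpotent
    · -- degenerate case : quotient of the top
      have hT : (T.W j).subgroupOf H = ⊤ := by
        rw [T.W_top hj]
        exact Subgroup.subgroupOf_self _
      haveI : Subsingleton (↥H ⧸ (T.W j).subgroupOf H) := by
        constructor
        intro a b
        obtain ⟨x, rfl⟩ := QuotientGroup.mk'_surjective _ a
        obtain ⟨y, rfl⟩ := QuotientGroup.mk'_surjective _ b
        rw [QuotientGroup.mk'_eq_mk']
        exact ⟨x⁻¹ * y, by rw [hT]; trivial, by group⟩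
      exact nilpotent_of_subsingleton

end TowerIn


lemma commutator_le_of_normalizer {G : Type*} [Group G] {A B : Subgroup G}
    (h : B ≤ Subgroup.normalizer (SetLike.coe A)) : ⁅A, B⁆ ≤ A := by
  rw [Subgroup.commutator_le]
  intro a ha b hb
  rw [commutatorElement_def]
  have h1 : b * a⁻¹ * b⁻¹ ∈ A := conj_mem_of_le_normalizer' h hb (inv_mem ha)
  have : a * (b * a⁻¹ * b⁻¹) ∈ A := mul_mem ha h1
  simpa [mul_assoc] using this

lemma subgroup_ne_bot_exists {G : Type*} [Group G] {A : Subgroup G} (h : A ≠ ⊥) :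
    ∃ x ∈ A, x ≠ 1 := by
  by_contra hc
  push_neg at hc
  exact h (by ext x; simp only [Subgroup.mem_bot]; exact ⟨fun hx => hc x hx, by rintro rfl; exact one_mem _⟩)

universe u

theorem TowerIn.le_series_len :
    ∀ (t : ℕ) {G : Type u} [Group G] [Finite G] (T : TowerIn G t), 0 < t →
      ∀ {n : ℕ}, NilpotentSeries (⨆ i ∈ Finset.range t, T.P i : Subgroup G) n → t ≤ n := by
  intro t G _ _ T ht n ser
  set H : Subgroup G := ⨆ i ∈ Finset.range t, T.P i with hHdef
  -- the top group of the tower is nontrivial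
  have hPtop_ne : T.P (t - 1) ≠ ⊥ := fun h => T.hnontriv (t-1) (by omega) (T.hClast.trans h.symm)
  -- n is at least 1
  have hn1 : 1 ≤ n := by
    by_contra hn
    have hn0 : n = 0 := by omega
    subst hn0
    have h0 : (⊥ : Subgroup ↥H) = ⊤ := by rw [← ser.bot, ser.top]
    obtain ⟨x, hxP, hx1⟩ := subgroup_ne_bot_exists hPtop_ne
    have hxH : x ∈ H := T.P_le_H (by omega) hxP
    have : (⟨x, hxH⟩ : ↥H) ∈ (⊥ : Subgroup ↥H) := by rw [h0]; trivial
    exact hx1 (by simpa [Subgroup.mem_bot, Subtype.ext_iff] using this)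
  rcases Nat.lt_or_ge t 2 with ht2 | ht2
  · omega
  -- now t ≥ 2; set up the reduction
  obtain ⟨m, rfl⟩ : ∃ m, n = m + 1 := ⟨n - 1, by omega⟩
  set t' := t - 1 with ht'def
  set top := t - 2 with htopdef
  have htop1 : top + 1 = t - 1 := by omega
  have ht't : t' < t := by omega
  have hPH : ∀ i, i < t → T.P i ≤ H := fun i hi => T.P_le_H hi
  set X : ℕ → Subgroup ↥H := fun i => (T.P i).subgroupOf H with hXdef
  set K₀ : Subgroup ↥H := ⨆ i ∈ Finset.range t', X i with hK₀def
  have hXK : ∀ i, i < t' → X i ≤ K₀ := fun i hi => le_biSup _ (Finset.mem_range.mpr hi)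
  set ser1 := ser.restrict K₀ with hser1
  set N₀ : Subgroup ↥K₀ := (ser.s 1).subgroupOf K₀ with hN₀def
  haveI hN₀n : N₀.Normal := (ser.normal 1).comap K₀.subtype
  have hN₀eq : N₀ = ser1.s 1 := rfl
  set ser2 := ser1.quotDrop N₀ hN₀eq with hser2
  set π₁ := QuotientGroup.mk' N₀ with hπ₁
  set Z : Subgroup ↥K₀ := ((T.C top).subgroupOf H).subgroupOf K₀ with hZdef
  set M : Subgroup (↥K₀ ⧸ N₀) := Z.map π₁ with hMdef
  have hKnormY : K₀ ≤ Subgroup.normalizer (SetLike.coe ((T.C top).subgroupOf H)) := by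
    refine iSup_le fun i => iSup_le fun hi => ?_
    have hit' : i < t' := Finset.mem_range.mp hi
    exact subgroupOf_normalizer_le (hPH i (by omega)) (T.normC' (by omega) (by omega))
  have hZnormal : Z.Normal := normal_subgroupOf_of_le_normalizer hKnormY
  haveI hMnormal : M.Normal := hZnormal.map π₁ (QuotientGroup.mk'_surjective N₀)
  set π₂ := QuotientGroup.mk' M with hπ₂
  set ρ : ↥K₀ →* ((↥K₀ ⧸ N₀) ⧸ M) := π₂.comp π₁ with hρ
  set ser3 := ser2.map π₂ (QuotientGroup.mk'_surjective M) with hser3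
  set Ψ : Subgroup G → Subgroup ((↥K₀ ⧸ N₀) ⧸ M) :=
    fun A => ((A.subgroupOf H).subgroupOf K₀).map ρ with hΨdef
  set P'' : ℕ → Subgroup ((↥K₀ ⧸ N₀) ⧸ M) := fun i => Ψ (T.P i) with hP''def
  -- membership in Ψ A
  have hmemΨ : ∀ (A : Subgroup G) (y : (↥K₀ ⧸ N₀) ⧸ M),
      y ∈ Ψ A ↔ ∃ x : ↥K₀, ((x : ↥H) : G) ∈ A ∧ ρ x = y := by
    intro A y
    constructor
    · rintro ⟨x, hx, rfl⟩
      exact ⟨x, hx, rfl⟩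
    · rintro ⟨x, hx, rfl⟩
      exact ⟨x, by simpa [Subgroup.mem_subgroupOf] using hx, rfl⟩
  -- normalizer facts for the new tower
  have hnorm'' : ∀ i j, i ≤ j → j < t' → P'' i ≤ Subgroup.normalizer (SetLike.coe (P'' j)) := by
    intro i j hij hj
    apply map_normalizer_le
    apply subgroupOf_normalizer_le (hXK i (by omega))
    apply subgroupOf_normalizer_le (hPH i (by omega))
    exact T.hnorm i j hij (by omega)
  have hQnorm : ∀ i j, i ≤ j → j ≤ top → P'' i ≤ Subgroup.normalizer (SetLike.coe (P'' j)) :=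
    fun i j hij hj => hnorm'' i j hij (by omega)
  -- pushing the key inclusions
  have hCpush : ∀ k j, j + k = top → Ψ (T.C j) ≤ towC P'' top j := by
    intro k
    induction k with
    | zero =>
      intro j hj
      have hjt : j = top := by omega
      rw [hjt, towC_top hQnorm]
      have hmm : Ψ (T.C top) = Subgroup.map π₂ M := by
        show Subgroup.map ρ Z = _
        rw [hρ, ← Subgroup.map_map, ← hMdef]
      rw [hmm, hπ₂, QuotientGroup.map_mk'_self]
    | succ k ih =>
      intro j hj
      intro x hx
      obtain ⟨xk, hxC, rfl⟩ := (hmemΨ (T.C j) x).mp hx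
      have hjtop : j < top := by omega
      rw [towC_succ_iff hQnorm hjtop]
      have hjt : j + 1 < t := by omega
      constructor
      · exact (hmemΨ (T.P j) _).mpr ⟨xk, T.hCle j (by omega) hxC, rfl⟩
      · intro y hy
        obtain ⟨yk, hyP, rfl⟩ := (hmemΨ (T.P (j+1)) y).mp hy
        have hco : ⁅ρ xk, ρ yk⁆ = ρ ⁅xk, yk⁆ := (map_commutatorElement ρ xk yk).symm
        rw [hco]
        have hmemC : ((⁅xk, yk⁆ : ↥K₀) : ↥H).1 ∈ T.C (j + 1) := by
          have := ((T.hCdef j hjt _).mp hxC).2 _ hyP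
          exact this
        exact ih (j+1) (by omega) ((hmemΨ (T.C (j+1)) _).mpr ⟨⁅xk, yk⁆, hmemC, rfl⟩)
  -- the new commutator condition
  have hcomm'' : ∀ i, i + 1 < t' → ⁅P'' (i+1), P'' i⁆ ⊔ towC P'' top (i+1) = P'' (i+1) := by
    intro i hi
    apply le_antisymm
    · exact sup_le (commutator_le_of_normalizer (hnorm'' i (i+1) (by omega) hi))
        (towC_le hQnorm (by omega))
    · have horig := T.hcomm i (by omega)
      have hcomle : ⁅T.P (i+1), T.P i⁆ ≤ T.P (i+1) :=
        commutator_le_of_normalizer (T.hnorm i (i+1) (by omega) (by omega))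
      have hcomH : ⁅T.P (i+1), T.P i⁆ ≤ H := le_trans hcomle (hPH _ (by omega))
      have hsub1 : (⁅T.P (i+1), T.P i⁆).subgroupOf H ≤ K₀ :=
        le_trans (Subgroup.comap_mono hcomle) (hXK (i+1) hi)
      have hsub2 : (T.C (i+1)).subgroupOf H ≤ K₀ :=
        le_trans (Subgroup.comap_mono (T.hCle (i+1) (by omega))) (hXK (i+1) hi)
      have hΨeq : Ψ (T.P (i+1)) = Ψ ⁅T.P (i+1), T.P i⁆ ⊔ Ψ (T.C (i+1)) := by
        show Subgroup.map ρ (((T.P (i+1)).subgroupOf H).subgroupOf K₀)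
            = Subgroup.map ρ ((⁅T.P (i+1), T.P i⁆.subgroupOf H).subgroupOf K₀)
              ⊔ Subgroup.map ρ (((T.C (i+1)).subgroupOf H).subgroupOf K₀)
        conv_lhs => rw [← horig]
        rw [Subgroup.subgroupOf_sup hcomH
          (le_trans (T.hCle (i+1) (by omega)) (hPH (i+1) (by omega)))]
        rw [Subgroup.subgroupOf_sup hsub1 hsub2]
        rw [Subgroup.map_sup]
      have hΨcomm : Ψ ⁅T.P (i+1), T.P i⁆ = ⁅P'' (i+1), P'' i⁆ := by
        show Subgroup.map ρ ((⁅T.P (i+1), T.P i⁆.subgroupOf H).subgroupOf K₀)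
            = ⁅Subgroup.map ρ (((T.P (i+1)).subgroupOf H).subgroupOf K₀),
               Subgroup.map ρ (((T.P i).subgroupOf H).subgroupOf K₀)⁆
        rw [commutator_subgroupOf (hPH (i+1) (by omega)) (hPH i (by omega))]
        rw [commutator_subgroupOf (hXK (i+1) hi) (hXK i (by omega))]
        rw [Subgroup.map_commutator]
      calc P'' (i+1) = Ψ ⁅T.P (i+1), T.P i⁆ ⊔ Ψ (T.C (i+1)) := hΨeq
        _ ≤ ⁅P'' (i+1), P'' i⁆ ⊔ towC P'' top (i+1) :=
          sup_le (le_sup_of_le_left (le_of_eq hΨcomm))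
            (le_sup_of_le_right (hCpush (top - (i+1)) (i+1) (by omega)))
  -- the core nontriviality at the top
  set NG : Subgroup G := (ser.s 1).map H.subtype with hNGdef
  have hNGnil : Group.IsNilpotent NG := by
    haveI := ser.normal 0
    have hinj : Function.Injective (QuotientGroup.mk' (ser.s 0)) := by
      rw [← MonoidHom.ker_eq_bot_iff, QuotientGroup.ker_mk', ser.bot]
    exact nilpotent_subgroup_map H.subtype _ (nilpotent_of_map_inj hinj _ (ser.nilpotent 0))
  have hHnormNG : H ≤ Subgroup.normalizer (SetLike.coe NG) := by
    apply normalizer_of_conj'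
    intro x hx mg hmg
    obtain ⟨nn, hnn, rfl⟩ := hmg
    have : (⟨x, hx⟩ : ↥H) * nn * (⟨x, hx⟩ : ↥H)⁻¹ ∈ ser.s 1 :=
      (ser.normal 1).conj_mem nn hnn ⟨x, hx⟩
    exact ⟨_, this, rfl⟩
  have hcore : P'' top ≠ ⊥ := by
    intro hbot
    have hdecomp : ∀ g ∈ T.P top, ∃ c ∈ T.C top, ∃ mm ∈ NG, g = c * mm := by
      intro g hg
      have hgH : g ∈ H := hPH top (by omega) hg
      have hgK : (⟨g, hgH⟩ : ↥H) ∈ K₀ := hXK top (by omega) (by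
        simpa [hXdef, Subgroup.mem_subgroupOf] using hg)
      set gk : ↥K₀ := ⟨⟨g, hgH⟩, hgK⟩ with hgk
      have hρg : ρ gk = 1 := by
        have : ρ gk ∈ P'' top := (hmemΨ (T.P top) _).mpr ⟨gk, hg, rfl⟩
        rw [hbot] at this
        simpa using this
      have hπ₁M : π₁ gk ∈ M := by
        rw [hρ] at hρg
        exact (QuotientGroup.eq_one_iff _).mp hρg
      obtain ⟨z, hz, hzeq⟩ := hπ₁M
      obtain ⟨w, hw, hzw⟩ := (QuotientGroup.mk'_eq_mk' N₀).mp hzeq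
      have hgeq : g = ((z : ↥H) : G) * ((w : ↥H) : G) := by
        have : ((z * w : ↥K₀) : ↥H) = (⟨g, hgH⟩ : ↥H) := by rw [hzw]
        have h2 : (((z * w : ↥K₀) : ↥H) : G) = g := by rw [this]
        simpa using h2.symm
      refine ⟨_, hz, _, ⟨(w : ↥H), hw, rfl⟩, hgeq⟩
    -- apply the core contradiction lemma
    have e1 : top + 1 = t - 1 := htop1
    have hcent : ∀ c ∈ T.C top, ∀ x ∈ T.P (t-1), c * x = x * c := by
      intro c hc x hx
      have h1 := ((T.hCdef top (by omega) c).mp hc).2 x (by rw [e1]; exact hx)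
      rw [e1, T.hClast, Subgroup.mem_bot] at h1
      have := commutatorElement_eq_one_iff_commute.mp h1
      exact this.eq
    have hcommPQ : ⁅T.P (t-1), T.P top⁆ = T.P (t-1) := by
      have := T.hcomm top (by omega)
      rw [e1, T.hClast, sup_bot_eq] at this
      exact this
    have hpq : T.p top ≠ T.p (t-1) := by
      have := T.hpne top (by omega)
      rwa [e1] at this
    exact tower_core (T.hprime (t-1) (by omega)) (T.hprime top (by omega)) hpq
      (T.P (t-1)) (T.P top) (T.C top) NG
      (T.hpgroup (t-1) (by omega)) (T.hpgroup top (by omega))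
      hPtop_ne hcent (T.hCle top (by omega)) hcommPQ hNGnil
      (le_trans (hPH (t-1) (by omega)) hHnormNG) hdecomp
  -- nontriviality at every level, by the upward cascade
  have hnontriv'' : ∀ i, i < t' → towC P'' top i ≠ P'' i := by
    intro i hi heq
    have hstep : ∀ d j, j = i + d → j ≤ top → towC P'' top j = P'' j := by
      intro d
      induction d with
      | zero => intro j hj _; rw [hj]; simpa using heq
      | succ d ihd =>
        intro j hj hjtop
        have hprev : towC P'' top (i + d) = P'' (i + d) := ihd (i + d) rfl (by omega)
        apply le_antisymm (towC_le hQnorm (by omega))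
        have hc := hcomm'' (i + d) (by omega)
        have hle : ⁅P'' (i + d + 1), P'' (i + d)⁆ ≤ towC P'' top (i + d + 1) := by
          rw [Subgroup.commutator_le]
          intro a ha b hb
          rw [← hprev] at hb
          have hbprop := (towC_succ_iff hQnorm (by omega : i + d < top) b).mp hb
          have h2 : ⁅b, a⁆ ∈ towC P'' top (i + d + 1) := hbprop.2 a ha
          rw [← commutatorElement_inv]
          exact inv_mem h2
        have : P'' (i + d + 1) ≤ towC P'' top (i + d + 1) := by
          rw [← hc]
          exact sup_le hle le_rfl
        rw [hj]
        have hjd : j = i + d + 1 := hj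
        rw [hjd] at *
        exact this
    have htopeq := hstep (top - i) top (by omega) le_rfl
    rw [towC_top hQnorm] at htopeq
    exact hcore htopeq.symm
  -- assemble the new tower
  set T'' : TowerIn ((↥K₀ ⧸ N₀) ⧸ M) t' :=
    { p := T.p
      P := P''
      C := towC P'' top
      hprime := fun i hi => T.hprime i (by omega)
      hpgroup := fun i hi => (((T.hpgroup i (by omega)).comap_subtype).comap_subtype).map ρ
      hpne := fun i hi => T.hpne i (by omega)
      hnorm := hnorm''
      hClast := by
        have : t' - 1 = top := by omega
        rw [this]
        exact towC_top hQnorm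
      hCle := fun i hi => towC_le hQnorm (by omega)
      hCdef := fun i hi x => towC_succ_iff hQnorm (by omega) x
      hnontriv := hnontriv''
      hcomm := hcomm'' } with hT''def
  have ht'pos : 0 < t' := by omega
  have hser4 : NilpotentSeries (⨆ i ∈ Finset.range t', T''.P i : Subgroup ((↥K₀ ⧸ N₀) ⧸ M)) m :=
    ser3.restrict _
  have hrec := TowerIn.le_series_len t' T'' ht'pos hser4
  omega
termination_by t => t

/-- A tower `P̂ 0, …, P̂ (t-1)` of `pᵢ`-subgroups witnesses Fitting length at least `t`.
The subgroup `C i` plays the role of `C_{P̂ᵢ}(P_{i+1})`, so that `Pᵢ = P̂ᵢ / C i`;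
centralizing the quotient `P_{i+1}` is encoded by commutators falling into `C (i+1)`. -/
theorem tower_fittingLength {G : Type*} [Group G] [Finite G] (t : ℕ) (ht : 0 < t)
    (p : ℕ → ℕ) (P C : ℕ → Subgroup G)
    (hprime : ∀ i < t, (p i).Prime)
    (hpgroup : ∀ i < t, IsPGroup (p i) (P i))
    (hpne : ∀ i, i + 1 < t → p i ≠ p (i + 1))
    (hnorm : ∀ i j, i ≤ j → j < t → P i ≤ Subgroup.normalizer (P j : Set G))
    (hClast : C (t - 1) = ⊥)
    (hCle : ∀ i < t, C i ≤ P i)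
    (hCdef : ∀ i, i + 1 < t → ∀ x : G,
      x ∈ C i ↔ x ∈ P i ∧ ∀ y ∈ P (i + 1), ⁅x, y⁆ ∈ C (i + 1))
    (hnontriv : ∀ i < t, C i ≠ P i)
    (hcomm : ∀ i, i + 1 < t → ⁅P (i + 1), P i⁆ ⊔ C (i + 1) = P (i + 1)) :
    t ≤ fittingLength (⨆ i ∈ Finset.range t, P i : Subgroup G) := by
  set T : TowerIn G t :=
    { p := p, P := P, C := C, hprime := hprime, hpgroup := hpgroup, hpne := hpne,
      hnorm := hnorm, hClast := hClast, hCle := hCle, hCdef := hCdef,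
      hnontriv := hnontriv, hcomm := hcomm } with hT
  have hne : {n | Nonempty (NilpotentSeries
      (⨆ i ∈ Finset.range t, P i : Subgroup G) n)}.Nonempty :=
    ⟨t, ⟨T.series⟩⟩
  have hmem := Nat.sInf_mem hne
  obtain ⟨ser⟩ := hmem
  exact TowerIn.le_series_len t T ht ser
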